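/- arXiv:1204.6378 — 5 statements merged into one kernel-verified Lean document; each statement's English description precedes it below -/
import Mathlib

section
/- Let (X,d) be a metric space with Borel σ-algebra, m a measure on X, and j a measurable kernel on X such that the measure J(dx,dy) = j(x,dy)m(dx) on X × X is symmetric under (x,y) ↦ (y,x). Fix x₀ ∈ X, R > 2 and c₁ > 2, and define the cut-off function θ_R(x) = max( min( (R − d(x,x₀))/(R − 1), 1 ), 0 ). Then ∬ (θ_R(x) − θ_R(y))² j(x,dy) m(dx) ≤ (33 c₁² / R²) · ∫_{ closedBall(x₀,R) } ∫ ( min(d(x,y), R) )² j(x,dy) m(dx). -/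
open MeasureTheory ProbabilityTheory Metric
open scoped ENNReal

/-- Jump-energy estimate for the cut-off `θ_R` in the recurrence test:
`∬ (θ_R(x) − θ_R(y))² j(x,dy) m(dx)
   ≤ (33 c₁²/R²) ∫_{closedBall(x₀,R)} ∫ (d(x,y) ∧ R)² j(x,dy) m(dx)`. -/
theorem stmt_2 {X : Type*} [MetricSpace X] [MeasurableSpace X] [BorelSpace X]
    (m : Measure X) [SFinite m] (j : Kernel X X) [IsSFiniteKernel j]
    (hsymm : (m ⊗ₘ j).map Prod.swap = m ⊗ₘ j)
    (x₀ : X) (R c₁ : ℝ) (hR : 2 < R) (hc₁ : 2 < c₁)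
    (θ : X → ℝ) (hθ : ∀ x, θ x = max (min ((R - dist x x₀) / (R - 1)) 1) 0) :
    ∫⁻ x, ∫⁻ y, ENNReal.ofReal ((θ x - θ y) ^ 2) ∂(j x) ∂m
      ≤ ENNReal.ofReal (33 * c₁ ^ 2 / R ^ 2) *
        ∫⁻ x in closedBall x₀ R, ∫⁻ y, ENNReal.ofReal ((min (dist x y) R) ^ 2) ∂(j x) ∂m := by
  have hR0 : (0:ℝ) < R := by linarith
  have hR1 : (0:ℝ) < R - 1 := by linarith
  set B := closedBall x₀ R with hB
  have hBmeas : MeasurableSet B := measurableSet_closedBall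
  -- θ is continuous
  have hθc : Continuous θ := by
    rw [show θ = fun x => max (min ((R - dist x x₀) / (R - 1)) 1) 0 from funext hθ]
    fun_prop
  -- vanishing outside B
  have hθ0 : ∀ x, x ∉ B → θ x = 0 := by
    intro x hx
    rw [hθ]
    have : R < dist x x₀ := by simpa [B, mem_closedBall] using hx
    have h1 : (R - dist x x₀) / (R - 1) < 0 := div_neg_of_neg_of_pos (by linarith) hR1
    exact max_eq_right (le_of_lt (lt_of_le_of_lt (min_le_left _ _) h1))
  -- key pointwise bound
  have hkey : ∀ x y : X, (θ x - θ y) ^ 2 ≤ 4 / R ^ 2 * (min (dist x y) R) ^ 2 := by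
    intro x y
    have hmin0 : 0 ≤ min (dist x y) R := le_min dist_nonneg hR0.le
    have h1 : |θ x - θ y| ≤ min (dist x y) R / (R - 1) := by
      have hlip : |θ x - θ y| ≤ dist x y / (R - 1) := by
        rw [hθ, hθ]
        refine (abs_max_sub_max_le_abs _ _ _).trans ?_
        refine (abs_min_sub_min_le_max _ _ _ _).trans ?_
        simp only [sub_self, abs_zero, max_le_iff]
        refine ⟨?_, by positivity⟩
        have hnum : (R - dist x x₀) - (R - dist y x₀) = dist y x₀ - dist x x₀ := by ring
        rw [div_sub_div_same, hnum, abs_div, abs_of_pos hR1]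
        gcongr
        exact (abs_dist_sub_le y x x₀).trans (le_of_eq (dist_comm y x))
      have hb1 : |θ x - θ y| ≤ R / (R - 1) := by
        have h01 : ∀ z, 0 ≤ θ z ∧ θ z ≤ 1 := fun z => by
          rw [hθ]; exact ⟨le_max_right _ _, max_le (min_le_right _ _) zero_le_one⟩
        have hx := h01 x; have hy := h01 y
        have h1' : |θ x - θ y| ≤ 1 := abs_sub_le_iff.2 ⟨by linarith [hx.2, hy.1], by linarith [hy.2, hx.1]⟩
        exact h1'.trans (by rw [le_div_iff₀ hR1]; linarith)
      rcases le_total (dist x y) R with h | h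
      · rw [min_eq_left h]; exact hlip
      · rw [min_eq_right h]; exact hb1
    have h2 : min (dist x y) R / (R - 1) ≤ 2 / R * min (dist x y) R := by
      have heq : 2 / R * min (dist x y) R = 2 * min (dist x y) R / R := by ring
      rw [heq, div_le_div_iff₀ hR1 hR0]
      nlinarith [hmin0]
    calc (θ x - θ y) ^ 2 = |θ x - θ y| ^ 2 := (sq_abs _).symm
      _ ≤ (2 / R * min (dist x y) R) ^ 2 :=
          pow_le_pow_left₀ (abs_nonneg _) (h1.trans h2) 2
      _ = 4 / R ^ 2 * (min (dist x y) R) ^ 2 := by ring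
  -- product-measurable integrand
  set F : X × X → ℝ≥0∞ := fun p => ENNReal.ofReal ((θ p.1 - θ p.2) ^ 2) with hF
  have hθm : Measurable θ := hθc.measurable
  have hFmeas : Measurable F := by
    apply Measurable.ennreal_ofReal
    exact ((hθm.comp measurable_fst).sub (hθm.comp measurable_snd)).pow_const 2
  have hFsymm : ∀ p : X × X, F (Prod.swap p) = F p := by
    intro p; simp only [hF, Prod.fst_swap, Prod.snd_swap]
    rw [show (θ p.2 - θ p.1) ^ 2 = (θ p.1 - θ p.2) ^ 2 by ring]
  set G : X × X → ℝ≥0∞ := fun p => B.indicator (fun _ => (1:ℝ≥0∞)) p.1 * F p with hG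
  have hGmeas : Measurable G :=
    ((measurable_const.indicator hBmeas).comp measurable_fst).mul hFmeas
  -- pointwise bound
  have hpt : ∀ p : X × X, F p ≤ G p + G (Prod.swap p) := by
    rintro ⟨x, y⟩
    by_cases hx : x ∈ B
    · refine le_trans ?_ (le_add_of_nonneg_right zero_le)
      simp [hG, Set.indicator_of_mem hx]
    · by_cases hy : y ∈ B
      · refine le_trans ?_ (le_add_of_nonneg_left zero_le)
        simp only [hG, Prod.fst_swap, Set.indicator_of_mem hy, one_mul]
        rw [hFsymm ⟨x, y⟩]
      · simp [hF, hθ0 x hx, hθ0 y hy]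
  -- rewrite LHS as integral over the product
  have hLHS : ∫⁻ x, ∫⁻ y, ENNReal.ofReal ((θ x - θ y) ^ 2) ∂(j x) ∂m
      = ∫⁻ p, F p ∂(m ⊗ₘ j) := (Measure.lintegral_compProd hFmeas).symm
  -- symmetry step
  have hswap : ∫⁻ p, G (Prod.swap p) ∂(m ⊗ₘ j) = ∫⁻ p, G p ∂(m ⊗ₘ j) := by
    rw [← lintegral_map hGmeas measurable_swap, hsymm]
  -- evaluate ∫ G
  have hGeval : ∫⁻ p, G p ∂(m ⊗ₘ j) = ∫⁻ x in B, ∫⁻ y, F (x, y) ∂(j x) ∂m := by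
    rw [Measure.lintegral_compProd hGmeas]
    have : ∀ x, ∫⁻ y, G (x, y) ∂(j x)
        = B.indicator (fun x => ∫⁻ y, F (x, y) ∂(j x)) x := by
      intro x
      by_cases hx : x ∈ B <;> simp [hG, Set.indicator_of_mem, hx]
    simp_rw [this]
    exact lintegral_indicator hBmeas _
  -- slice-wise bound
  have hslice : ∀ x, ∫⁻ y, F (x, y) ∂(j x)
      ≤ ENNReal.ofReal (4 / R ^ 2) * ∫⁻ y, ENNReal.ofReal ((min (dist x y) R) ^ 2) ∂(j x) := by
    intro x
    rw [← lintegral_const_mul' _ _ ENNReal.ofReal_ne_top]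
    refine lintegral_mono fun y => ?_
    rw [← ENNReal.ofReal_mul (by positivity)]
    exact ENNReal.ofReal_le_ofReal (hkey x y)
  -- put everything together
  set A := ∫⁻ x in B, ∫⁻ y, ENNReal.ofReal ((min (dist x y) R) ^ 2) ∂(j x) ∂m with hA
  calc ∫⁻ x, ∫⁻ y, ENNReal.ofReal ((θ x - θ y) ^ 2) ∂(j x) ∂m
      = ∫⁻ p, F p ∂(m ⊗ₘ j) := hLHS
    _ ≤ ∫⁻ p, (G p + G (Prod.swap p)) ∂(m ⊗ₘ j) := lintegral_mono hpt
    _ = ∫⁻ p, G p ∂(m ⊗ₘ j) + ∫⁻ p, G (Prod.swap p) ∂(m ⊗ₘ j) :=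
        lintegral_add_left hGmeas _
    _ = 2 * ∫⁻ p, G p ∂(m ⊗ₘ j) := by rw [hswap]; ring
    _ = 2 * ∫⁻ x in B, ∫⁻ y, F (x, y) ∂(j x) ∂m := by rw [hGeval]
    _ ≤ 2 * (ENNReal.ofReal (4 / R ^ 2) * A) := by
        gcongr
        refine le_trans (lintegral_mono fun x => hslice x) ?_
        rw [lintegral_const_mul' _ _ ENNReal.ofReal_ne_top]
    _ = ENNReal.ofReal (8 / R ^ 2) * A := by
        rw [← mul_assoc, show (2:ℝ≥0∞) = ENNReal.ofReal 2 by simp,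
          ← ENNReal.ofReal_mul (by norm_num)]
        congr 1; ring_nf
    _ ≤ ENNReal.ofReal (33 * c₁ ^ 2 / R ^ 2) * A := by
        refine mul_le_mul_left (ENNReal.ofReal_le_ofReal ?_) A
        gcongr
        nlinarith
end

section
/- Let n ≥ 1, x₀ ∈ ℝⁿ and R > 2, and define θ_R : ℝⁿ → ℝ by θ_R(x) = max( min( (R − ‖x − x₀‖)/(R − 1), 1 ), 0 ). Then ∫_{ℝⁿ} ‖fderiv ℝ θ_R x‖² dx ≤ (4 / R²) · volume( closedBall(x₀, R) ), where fderiv ℝ θ_R x denotes the Fréchet derivative of θ_R at x (taken to be 0 at points where θ_R is not differentiable) and volume is Lebesgue measure. -/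
open MeasureTheory Metric

/-- Dirichlet-energy estimate for the cut-off `θ_R` on `ℝⁿ`:
`∫ ‖∇θ_R‖² dx ≤ (4/R²) · volume(closedBall(x₀,R))`, where the gradient is the
Fréchet derivative (taken to be `0` at non-differentiability points). -/
theorem stmt_3 (n : ℕ) (hn : 1 ≤ n) (x₀ : EuclideanSpace ℝ (Fin n)) (R : ℝ) (hR : 2 < R)
    (θ : EuclideanSpace ℝ (Fin n) → ℝ)
    (hθ : ∀ x, θ x = max (min ((R - ‖x - x₀‖) / (R - 1)) 1) 0) :
    ∫⁻ x, ENNReal.ofReal (‖fderiv ℝ θ x‖ ^ 2)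
      ≤ ENNReal.ofReal (4 / R ^ 2) * volume (closedBall x₀ R) := by
  have hR1 : (0:ℝ) < R - 1 := by linarith
  have hRpos : (0:ℝ) < R := by linarith
  set K : NNReal := Real.toNNReal (R - 1)⁻¹ with hK
  have hKcoe : (K : ℝ) = (R - 1)⁻¹ := Real.coe_toNNReal _ (by positivity)
  -- the inner function is Lipschitz with constant K
  have hg : LipschitzWith K (fun x : EuclideanSpace ℝ (Fin n) => (R - ‖x - x₀‖) / (R - 1)) := by
    apply LipschitzWith.of_dist_le_mul
    intro x y
    have h1 : |‖y - x₀‖ - ‖x - x₀‖| ≤ dist x y := by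
      have h := abs_norm_sub_norm_le (y - x₀) (x - x₀)
      rw [dist_comm, dist_eq_norm]
      simpa [sub_sub_sub_cancel_right] using h
    rw [Real.dist_eq, hKcoe]
    have : (R - ‖x - x₀‖) / (R - 1) - (R - ‖y - x₀‖) / (R - 1)
        = (‖y - x₀‖ - ‖x - x₀‖) / (R - 1) := by ring
    rw [this, abs_div, abs_of_pos hR1, div_eq_mul_inv, mul_comm]
    gcongr
  have hθlip : LipschitzWith K θ := by
    have := (hg.min_const 1).max_const 0
    convert this using 1
    funext x; exact hθ x
  have hK2R : (K : ℝ) ≤ 2 / R := by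
    rw [hKcoe, inv_le_iff_one_le_mul₀ hR1, div_mul_eq_mul_div, le_div_iff₀ hRpos]
    nlinarith
  have hbound : ∀ x, ENNReal.ofReal (‖fderiv ℝ θ x‖ ^ 2)
      ≤ (closedBall x₀ R).indicator (fun _ => ENNReal.ofReal (4 / R ^ 2)) x := by
    intro x
    by_cases hx : x ∈ closedBall x₀ R
    · rw [Set.indicator_of_mem hx]
      apply ENNReal.ofReal_le_ofReal
      have h1 : ‖fderiv ℝ θ x‖ ≤ (K : ℝ) := norm_fderiv_le_of_lipschitz ℝ hθlip
      have h2 : ‖fderiv ℝ θ x‖ ≤ 2 / R := h1.trans hK2R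
      calc ‖fderiv ℝ θ x‖ ^ 2 ≤ (2 / R) ^ 2 := by
            gcongr
        _ = 4 / R ^ 2 := by ring
    · rw [Set.indicator_of_notMem hx]
      have hx' : R < ‖x - x₀‖ := by
        simpa [mem_closedBall, dist_eq_norm, not_le] using hx
      -- θ vanishes in a neighborhood of x
      have hnhds : θ =ᶠ[nhds x] (fun _ => (0:ℝ)) := by
        have hopen : IsOpen {y : EuclideanSpace ℝ (Fin n) | R < ‖y - x₀‖} := by
          have : {y : EuclideanSpace ℝ (Fin n) | R < ‖y - x₀‖} = (closedBall x₀ R)ᶜ := by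
            ext y; simp [mem_closedBall, dist_eq_norm, not_le]
          rw [this]; exact isOpen_compl_iff.mpr Metric.isClosed_closedBall
        filter_upwards [hopen.mem_nhds hx'] with y hy
        have hy' : (R - ‖y - x₀‖) / (R - 1) ≤ 0 :=
          div_nonpos_of_nonpos_of_nonneg (by linarith [hy]) (by linarith)
        rw [hθ y]
        exact max_eq_right ((min_le_left _ _).trans hy')
      have : fderiv ℝ θ x = fderiv ℝ (fun _ => (0:ℝ)) x := hnhds.fderiv_eq
      rw [this, fderiv_fun_const]
      simp
  calc ∫⁻ x, ENNReal.ofReal (‖fderiv ℝ θ x‖ ^ 2)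
      ≤ ∫⁻ x, (closedBall x₀ R).indicator (fun _ => ENNReal.ofReal (4 / R ^ 2)) x :=
        lintegral_mono hbound
    _ = ENNReal.ofReal (4 / R ^ 2) * volume (closedBall x₀ R) := by
        rw [lintegral_indicator measurableSet_closedBall, lintegral_const,
          Measure.restrict_apply MeasurableSet.univ, Set.univ_inter]
end

section
/- Let (X,d) be a metric space with Borel σ-algebra, m a measure on X, 0 < a < 1, and j a measurable kernel on X such that j(x, X \ closedBall(x,a)) = 0 for every x and ∫ ( min(d(x,y),a) )² j(x,dy) ≤ M for every x, where M > 0. Let K ⊆ X be a nonempty bounded set, x₀ ∈ X, and D = sup_{y ∈ K} d(x₀,y). Let α > 0 and φ(x) = exp( α · dist(x,K) ), where dist(x,K) = inf_{y∈K} d(x,y). Let n ∈ ℕ with n ≥ a⁻¹ (4a + 2D), let g_n(x) = max( min( n − a⁻¹ d(x,x₀), 1 ), 0 ), and let A_n = closedBall(x₀,(n+1)a) \ ball(x₀,(n−2)a). Then ∫_X φ(x)⁻¹ ( ∫ (g_n(x) − g_n(y))² j(x,dy) ) m(dx) ≤ a⁻² M e^{−aαn/2} m(A_n). -/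
open MeasureTheory ProbabilityTheory Metric

private lemma clamp_lip (u v : ℝ) :
    |max (min u 1) 0 - max (min v 1) 0| ≤ |u - v| := by
  refine (abs_max_sub_max_le_abs _ _ _).trans ?_
  have := abs_min_sub_min_le_max u 1 v 1
  simpa using this

/-- Key estimate for Davies' method: the `φ⁻¹`-weighted jump energy of the
cut-off `g_n` is at most `a⁻² M e^{−aαn/2} m(A_n)`, where
`A_n = closedBall(x₀,(n+1)a) \ ball(x₀,(n−2)a)`, `φ = exp(α·dist(·,K))`,
`D = sup_{y∈K} d(x₀,y)` and `n ≥ a⁻¹(4a+2D)`. -/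
theorem stmt_6 {X : Type*} [MetricSpace X] [MeasurableSpace X] [BorelSpace X]
    (m : Measure X) (j : Kernel X X)
    (a M : ℝ) (ha0 : 0 < a) (ha1 : a < 1) (hM : 0 < M)
    (hjsupp : ∀ x, j x (closedBall x a)ᶜ = 0)
    (hjM : ∀ x, ∫⁻ y, ENNReal.ofReal ((min (dist x y) a) ^ 2) ∂(j x) ≤ ENNReal.ofReal M)
    (K : Set X) (hK : K.Nonempty) (hKb : Bornology.IsBounded K)
    (x₀ : X) (D : ℝ) (hD : D = sSup ((fun y => dist x₀ y) '' K))
    (α : ℝ) (hα : 0 < α)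
    (φ : X → ℝ) (hφ : ∀ x, φ x = Real.exp (α * infDist x K))
    (n : ℕ) (hn : a⁻¹ * (4 * a + 2 * D) ≤ (n : ℝ))
    (g : X → ℝ) (hg : ∀ x, g x = max (min ((n : ℝ) - a⁻¹ * dist x x₀) 1) 0)
    (A : Set X) (hA : A = closedBall x₀ (((n : ℝ) + 1) * a) \ ball x₀ (((n : ℝ) - 2) * a)) :
    ∫⁻ x, ENNReal.ofReal ((φ x)⁻¹) * ∫⁻ y, ENNReal.ofReal ((g x - g y) ^ 2) ∂(j x) ∂m
      ≤ ENNReal.ofReal (a⁻¹ ^ 2 * M * Real.exp (-(a * α * (n : ℝ)) / 2)) * m A := by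
  have ha0' : (0 : ℝ) < a⁻¹ := inv_pos.mpr ha0
  -- D bounds dist x₀ y for y ∈ K, and D ≥ 0
  have hDub : ∀ y ∈ K, dist x₀ y ≤ D := by
    intro y hy
    rw [hD]
    apply le_csSup
    · obtain ⟨r, hr⟩ := hKb.subset_closedBall x₀
      exact ⟨r, by rintro _ ⟨z, hz, rfl⟩; simpa [dist_comm] using hr hz⟩
    · exact ⟨y, hy, rfl⟩
  -- pointwise Lipschitz-type bound
  have hlip : ∀ x y : X, (g x - g y) ^ 2 ≤ a⁻¹ ^ 2 * (min (dist x y) a) ^ 2 := by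
    intro x y
    have h1 : |g x - g y| ≤ a⁻¹ * dist x y := by
      rw [hg x, hg y]
      refine (clamp_lip _ _).trans ?_
      have : ((n : ℝ) - a⁻¹ * dist x x₀) - ((n : ℝ) - a⁻¹ * dist y x₀)
          = a⁻¹ * (dist y x₀ - dist x x₀) := by ring
      rw [this, abs_mul, abs_of_pos ha0']
      calc a⁻¹ * |dist y x₀ - dist x x₀| ≤ a⁻¹ * dist y x :=
            mul_le_mul_of_nonneg_left (abs_dist_sub_le y x x₀) ha0'.le
        _ = a⁻¹ * dist x y := by rw [dist_comm]
    have h2 : |g x - g y| ≤ 1 := by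
      rw [hg x, hg y, abs_le]
      constructor <;> nlinarith [le_max_right (min ((n:ℝ) - a⁻¹ * dist x x₀) 1) 0,
        le_max_right (min ((n:ℝ) - a⁻¹ * dist y x₀) 1) 0,
        max_le (min_le_right ((n:ℝ) - a⁻¹ * dist x x₀) 1) zero_le_one,
        max_le (min_le_right ((n:ℝ) - a⁻¹ * dist y x₀) 1) zero_le_one]
    have h3 : |g x - g y| ≤ a⁻¹ * min (dist x y) a := by
      rcases min_cases (dist x y) a with ⟨he, _⟩ | ⟨he, hlt⟩
      · rw [he]; exact h1
      · rw [he]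
        have : a⁻¹ * a = 1 := inv_mul_cancel₀ ha0.ne'
        rw [this]; exact h2
    calc (g x - g y) ^ 2 = |g x - g y| ^ 2 := (sq_abs _).symm
      _ ≤ (a⁻¹ * min (dist x y) a) ^ 2 := by
          apply pow_le_pow_left₀ (abs_nonneg _) h3
      _ = a⁻¹ ^ 2 * (min (dist x y) a) ^ 2 := by ring
  -- bound on the inner integral, valid for all x
  have hΓle : ∀ x, (∫⁻ y, ENNReal.ofReal ((g x - g y) ^ 2) ∂(j x))
      ≤ ENNReal.ofReal (a⁻¹ ^ 2 * M) := by
    intro x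
    calc ∫⁻ y, ENNReal.ofReal ((g x - g y) ^ 2) ∂(j x)
        ≤ ∫⁻ y, ENNReal.ofReal (a⁻¹ ^ 2) * ENNReal.ofReal ((min (dist x y) a) ^ 2) ∂(j x) := by
          refine lintegral_mono fun y => ?_
          rw [← ENNReal.ofReal_mul (by positivity)]
          exact ENNReal.ofReal_le_ofReal (hlip x y)
      _ = ENNReal.ofReal (a⁻¹ ^ 2) * ∫⁻ y, ENNReal.ofReal ((min (dist x y) a) ^ 2) ∂(j x) :=
          lintegral_const_mul' _ _ ENNReal.ofReal_ne_top
      _ ≤ ENNReal.ofReal (a⁻¹ ^ 2) * ENNReal.ofReal M :=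
          mul_le_mul' le_rfl (hjM x)
      _ = ENNReal.ofReal (a⁻¹ ^ 2 * M) := (ENNReal.ofReal_mul (by positivity)).symm
  -- inner integral vanishes off A
  have hΓ0 : ∀ x, x ∉ A → (∫⁻ y, ENNReal.ofReal ((g x - g y) ^ 2) ∂(j x)) = 0 := by
    intro x hx
    have hae : ∀ᵐ y ∂(j x), y ∈ closedBall x a :=
      MeasureTheory.mem_ae_iff.mpr (hjsupp x)
    have hzero : ∀ᵐ y ∂(j x), ENNReal.ofReal ((g x - g y) ^ 2) = 0 := by
      filter_upwards [hae] with y hy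
      have hdy : dist x y ≤ a := by simpa [dist_comm] using hy
      rw [hA, Set.mem_diff, not_and_or, not_not] at hx
      have hgeq : g x = g y := by
        rcases hx with hx | hx
        · -- far out: both are 0
          rw [mem_closedBall, not_le] at hx
          have hgx : g x = 0 := by
            rw [hg]
            have : (n : ℝ) - a⁻¹ * dist x x₀ ≤ 0 := by
              rw [sub_nonpos]
              calc (n : ℝ) ≤ a⁻¹ * (((n:ℝ)+1) * a) := by
                    rw [mul_comm, mul_assoc, mul_inv_cancel₀ ha0.ne', mul_one]; linarith
                _ ≤ a⁻¹ * dist x x₀ := by nlinarith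
            rw [min_eq_left (this.trans zero_le_one), max_eq_right this]
          have hgy : g y = 0 := by
            rw [hg]
            have hdyx : (n : ℝ) * a ≤ dist y x₀ := by
              have := dist_triangle x y x₀
              nlinarith [dist_triangle x₀ x y, dist_comm x y]
            have : (n : ℝ) - a⁻¹ * dist y x₀ ≤ 0 := by
              rw [sub_nonpos]
              calc (n : ℝ) = a⁻¹ * ((n:ℝ) * a) := by
                    rw [mul_comm (n:ℝ) a, ← mul_assoc, inv_mul_cancel₀ ha0.ne', one_mul]
                _ ≤ a⁻¹ * dist y x₀ := by nlinarith
            rw [min_eq_left (this.trans zero_le_one), max_eq_right this]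
          rw [hgx, hgy]
        · -- deep inside: both are 1
          rw [mem_ball] at hx
          have hgx : g x = 1 := by
            rw [hg]
            have : (1:ℝ) ≤ (n : ℝ) - a⁻¹ * dist x x₀ := by
              have h2 : a⁻¹ * dist x x₀ < (n : ℝ) - 2 := by
                calc a⁻¹ * dist x x₀ < a⁻¹ * (((n:ℝ) - 2) * a) := by nlinarith
                  _ = (n : ℝ) - 2 := by
                      rw [mul_comm, mul_assoc, mul_inv_cancel₀ ha0.ne', mul_one]
              linarith
            rw [min_eq_right this, max_eq_left zero_le_one]
          have hgy : g y = 1 := by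
            rw [hg]
            have hdyx : dist y x₀ < ((n:ℝ) - 1) * a := by
              have := dist_triangle y x x₀
              nlinarith [dist_comm x y]
            have : (1:ℝ) ≤ (n : ℝ) - a⁻¹ * dist y x₀ := by
              have h2 : a⁻¹ * dist y x₀ < (n : ℝ) - 1 := by
                calc a⁻¹ * dist y x₀ < a⁻¹ * (((n:ℝ) - 1) * a) := by nlinarith
                  _ = (n : ℝ) - 1 := by
                      rw [mul_comm, mul_assoc, mul_inv_cancel₀ ha0.ne', mul_one]
              linarith
            rw [min_eq_right this, max_eq_left zero_le_one]
          rw [hgx, hgy]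
      simp [hgeq]
    exact (lintegral_congr_ae hzero).trans lintegral_zero
  -- φ⁻¹ small on A
  have hφA : ∀ x ∈ A, (φ x)⁻¹ ≤ Real.exp (-(a * α * (n : ℝ)) / 2) := by
    intro x hx
    rw [hA, Set.mem_diff, mem_ball, not_lt] at hx
    have hdist : ((n:ℝ) - 2) * a ≤ dist x x₀ := hx.2
    have hinf : a * (n : ℝ) / 2 ≤ infDist x K := by
      by_contra h
      push_neg at h
      obtain ⟨y, hy, hylt⟩ := (infDist_lt_iff hK).mp h
      have h1 : dist x x₀ ≤ dist x y + dist x₀ y := by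
        have := dist_triangle x y x₀
        simpa [dist_comm] using this
      have h2 : dist x₀ y ≤ D := hDub y hy
      have hna : 4 * a + 2 * D ≤ a * (n : ℝ) := by
        have := mul_le_mul_of_nonneg_left hn ha0.le
        rwa [← mul_assoc, mul_inv_cancel₀ ha0.ne', one_mul] at this
      nlinarith
    rw [hφ]
    rw [← Real.exp_neg]
    apply Real.exp_le_exp.mpr
    have : a * α * (n : ℝ) / 2 ≤ α * infDist x K := by nlinarith
    linarith
  -- put everything together
  have hAmeas : MeasurableSet A := by
    rw [hA]; exact measurableSet_closedBall.diff measurableSet_ball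
  calc ∫⁻ x, ENNReal.ofReal ((φ x)⁻¹) * ∫⁻ y, ENNReal.ofReal ((g x - g y) ^ 2) ∂(j x) ∂m
      ≤ ∫⁻ x, A.indicator
          (fun _ => ENNReal.ofReal (a⁻¹ ^ 2 * M * Real.exp (-(a * α * (n : ℝ)) / 2))) x ∂m := by
        refine lintegral_mono fun x => ?_
        by_cases hx : x ∈ A
        · rw [Set.indicator_of_mem hx]
          calc ENNReal.ofReal ((φ x)⁻¹) * ∫⁻ y, ENNReal.ofReal ((g x - g y) ^ 2) ∂(j x)
              ≤ ENNReal.ofReal (Real.exp (-(a * α * (n : ℝ)) / 2))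
                  * ENNReal.ofReal (a⁻¹ ^ 2 * M) :=
                mul_le_mul' (ENNReal.ofReal_le_ofReal (hφA x hx)) (hΓle x)
            _ = ENNReal.ofReal (a⁻¹ ^ 2 * M * Real.exp (-(a * α * (n : ℝ)) / 2)) := by
                rw [← ENNReal.ofReal_mul (Real.exp_nonneg _), mul_comm]
        · rw [Set.indicator_of_notMem hx, hΓ0 x hx, mul_zero]
    _ = ENNReal.ofReal (a⁻¹ ^ 2 * M * Real.exp (-(a * α * (n : ℝ)) / 2)) * m A :=
        lintegral_indicator_const hAmeas _
end

section
/- Let (X,d) be a metric space with Borel σ-algebra, 0 < a ≤ 1, and j a measurable kernel on X such that j(x, X \ closedBall(x,a)) = 0 for every x and ∫ ( min(d(x,y),a) )² j(x,dy) ≤ M for every x, where M > 0. Let ψ : X → [0,∞) be 1-Lipschitz, let α > 0 and n > 0, and set φ(x) = exp( α · min(ψ(x), n) ). Then for every x ∈ X, ∫ (φ(x) − φ(y))² j(x,dy) ≤ M α² e^{2αa} φ(x)². -/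
open MeasureTheory ProbabilityTheory Metric

lemma exp_sub_exp_abs_le (s t : ℝ) :
    |Real.exp s - Real.exp t| ≤ Real.exp (max s t) * |s - t| := by
  have key : ∀ u v : ℝ, v ≤ u → Real.exp u - Real.exp v ≤ Real.exp u * (u - v) := by
    intro u v huv
    have h := Real.add_one_le_exp (v - u)
    have he : Real.exp (v - u) = Real.exp v / Real.exp u := by
      rw [Real.exp_sub]
    rw [he, le_div_iff₀ (Real.exp_pos u)] at h
    nlinarith [Real.exp_pos u, Real.exp_pos v]
  rcases le_total t s with h | h
  · rw [abs_of_nonneg (sub_nonneg.2 (Real.exp_le_exp.2 h)), abs_of_nonneg (sub_nonneg.2 h),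
      max_eq_left h]
    exact key s t h
  · rw [abs_of_nonpos (sub_nonpos.2 (Real.exp_le_exp.2 h)), abs_of_nonpos (sub_nonpos.2 h),
      max_eq_right h, neg_sub, neg_sub]
    exact key t s h

/-- Pointwise bound on the jump carré du champ of the truncated exponential
weight `φ = exp(α(ψ ∧ n))` for a `1`-Lipschitz nonnegative `ψ`, when the kernel
`j` has jump range bounded by `a` and truncated second moments bounded by `M`:
`∫ (φ(x) − φ(y))² j(x,dy) ≤ M α² e^{2αa} φ(x)²`. -/
theorem stmt_7 {X : Type*} [MetricSpace X] [MeasurableSpace X] [BorelSpace X]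
    (j : Kernel X X) (a M : ℝ) (ha0 : 0 < a) (ha1 : a ≤ 1) (hM : 0 < M)
    (hjsupp : ∀ x, j x (closedBall x a)ᶜ = 0)
    (hjM : ∀ x, ∫⁻ y, ENNReal.ofReal ((min (dist x y) a) ^ 2) ∂(j x) ≤ ENNReal.ofReal M)
    (ψ : X → ℝ) (hψ : LipschitzWith 1 ψ) (hψ0 : ∀ x, 0 ≤ ψ x)
    (α n : ℝ) (hα : 0 < α) (hn : 0 < n)
    (φ : X → ℝ) (hφ : ∀ x, φ x = Real.exp (α * min (ψ x) n)) :
    ∀ x, ∫⁻ y, ENNReal.ofReal ((φ x - φ y) ^ 2) ∂(j x)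
      ≤ ENNReal.ofReal (M * α ^ 2 * Real.exp (2 * α * a) * φ x ^ 2) := by
  intro x
  have hφpos : ∀ z, 0 < φ z := fun z => by rw [hφ]; exact Real.exp_pos _
  set K := α ^ 2 * Real.exp (2 * α * a) * φ x ^ 2 with hK
  have hK0 : 0 ≤ K := by
    have := (hφpos x).le
    positivity
  have hae : ∀ᵐ y ∂(j x),
      ENNReal.ofReal ((φ x - φ y) ^ 2) ≤ ENNReal.ofReal (K * (min (dist x y) a) ^ 2) := by
    have hmem : ∀ᵐ y ∂(j x), y ∈ closedBall x a := by
      rw [ae_iff]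
      exact hjsupp x
    filter_upwards [hmem] with y hy
    apply ENNReal.ofReal_le_ofReal
    rw [mem_closedBall, dist_comm] at hy
    rw [min_eq_left hy]
    set u := α * min (ψ x) n with hu
    set v := α * min (ψ y) n with hv
    have hlip : |min (ψ x) n - min (ψ y) n| ≤ dist x y := by
      have h1 : |ψ x - ψ y| ≤ dist x y := by
        have := hψ.dist_le_mul x y
        rwa [Real.dist_eq, NNReal.coe_one, one_mul] at this
      have h2 : |min (ψ x) n - min (ψ y) n| ≤ |ψ x - ψ y| :=
        abs_min_sub_min_le_max (ψ x) n (ψ y) n |>.trans (by simp)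
      exact h2.trans h1
    have huv : |u - v| ≤ α * dist x y := by
      rw [hu, hv, ← mul_sub, abs_mul, abs_of_pos hα]
      exact mul_le_mul_of_nonneg_left hlip hα.le
    have hmax : max u v ≤ u + α * a := by
      rcases le_total v u with h | h
      · rw [max_eq_left h]; nlinarith
      · rw [max_eq_right h]
        have : v - u ≤ |u - v| := by rw [abs_sub_comm]; exact le_abs_self _
        have hda : α * dist x y ≤ α * a := mul_le_mul_of_nonneg_left hy hα.le
        linarith
    have habs : |φ x - φ y| ≤ Real.exp (α * a) * φ x * (α * dist x y) := by
      rw [hφ x, hφ y, ← hu, ← hv]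
      refine (exp_sub_exp_abs_le u v).trans ?_
      have h1 : Real.exp (max u v) ≤ Real.exp (α * a) * Real.exp u := by
        rw [← Real.exp_add]
        exact Real.exp_le_exp.2 (by linarith)
      have h2 : (0:ℝ) ≤ Real.exp (max u v) := (Real.exp_pos _).le
      have h3 : (0:ℝ) ≤ |u - v| := abs_nonneg _
      calc Real.exp (max u v) * |u - v|
          ≤ (Real.exp (α * a) * Real.exp u) * (α * dist x y) := by
            apply mul_le_mul h1 huv h3
            positivity
        _ = Real.exp (α * a) * Real.exp u * (α * dist x y) := rfl
    calc (φ x - φ y) ^ 2 = |φ x - φ y| ^ 2 := (sq_abs _).symm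
      _ ≤ (Real.exp (α * a) * φ x * (α * dist x y)) ^ 2 := by
          apply pow_le_pow_left₀ (abs_nonneg _) habs
      _ = K * dist x y ^ 2 := by
          rw [hK, show Real.exp (2 * α * a) = Real.exp (α * a) * Real.exp (α * a) from by
            rw [← Real.exp_add]; ring_nf]
          ring
  calc ∫⁻ y, ENNReal.ofReal ((φ x - φ y) ^ 2) ∂(j x)
      ≤ ∫⁻ y, ENNReal.ofReal (K * (min (dist x y) a) ^ 2) ∂(j x) := lintegral_mono_ae hae
    _ = ENNReal.ofReal K * ∫⁻ y, ENNReal.ofReal ((min (dist x y) a) ^ 2) ∂(j x) := by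
        simp_rw [ENNReal.ofReal_mul hK0]
        exact lintegral_const_mul' _ _ ENNReal.ofReal_ne_top
    _ ≤ ENNReal.ofReal K * ENNReal.ofReal M := by gcongr; exact hjM x
    _ = ENNReal.ofReal (M * α ^ 2 * Real.exp (2 * α * a) * φ x ^ 2) := by
        rw [← ENNReal.ofReal_mul hK0, hK]
        ring_nf
end

section
/- Let X be a measurable space, m a measure on X, and j a measurable kernel on X. Let u, φ : X → ℝ be measurable with φ(x) > 0 for all x. Then ∫_X |u(x)| ( ∫ |u(x) − u(y)| · |φ(x) − φ(y)| j(x,dy) ) m(dx) ≤ ( ∫_X φ(x) ∫ (u(x) − u(y))² j(x,dy) m(dx) )^{1/2} · ( ∫_X φ(x)⁻¹ u(x)² ∫ (φ(x) − φ(y))² j(x,dy) m(dx) )^{1/2}. -/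
open MeasureTheory ProbabilityTheory

private lemma conj22 : Real.HolderConjugate 2 2 := ⟨by norm_num, by norm_num, by norm_num⟩

private lemma rpow_half_sq (a : ENNReal) : (a ^ (1/2 : ℝ)) ^ (2 : ℝ) = a := by
  rw [← ENNReal.rpow_mul]; norm_num

private lemma sq_rpow_half (a : ENNReal) : (a ^ 2) ^ (1/2 : ℝ) = a := by
  rw [← ENNReal.rpow_natCast a 2, ← ENNReal.rpow_mul]; norm_num

private lemma ofReal_sq (a : ℝ) : ENNReal.ofReal |a| ^ (2 : ℝ) = ENNReal.ofReal (a ^ 2) := by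
  rw [show ((2:ℝ)) = ((2:ℕ):ℝ) by norm_num, ENNReal.rpow_natCast,
    ← ENNReal.ofReal_pow (abs_nonneg a), sq_abs]

/-- Joint measurability of `(x, s) ↦ j x {y | v y < s}` for a kernel `j`, without any
s-finiteness assumption, via a countable supremum over rationals. -/
private lemma meas_lt_kernel {X : Type*} [MeasurableSpace X] (j : Kernel X X)
    (v : X → ℝ) (hv : Measurable v) :
    Measurable (fun p : X × ℝ => j p.1 {y | v y < p.2}) := by
  have heq : ∀ p : X × ℝ, j p.1 {y | v y < p.2}
      = ⨆ q : ℚ, if (q : ℝ) < p.2 then j p.1 {y | v y ≤ (q : ℝ)} else 0 := by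
    rintro ⟨x, s⟩
    have hset : {y | v y < s} = ⋃ q : ℚ, (if (q : ℝ) < s then {y | v y ≤ (q : ℝ)} else ∅) := by
      ext y
      simp only [Set.mem_setOf_eq, Set.mem_iUnion]
      constructor
      · intro h
        obtain ⟨q, hq1, hq2⟩ := exists_rat_btwn h
        exact ⟨q, by simp [hq2, hq1.le]⟩
      · rintro ⟨q, hq⟩
        by_cases h : (q : ℝ) < s
        · simp only [if_pos h, Set.mem_setOf_eq] at hq; linarith
        · simp [if_neg h] at hq
    have hdir : Directed (· ⊆ ·)
        (fun q : ℚ => if (q : ℝ) < s then {y | v y ≤ (q : ℝ)} else ∅) := by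
      intro q₁ q₂
      by_cases h1 : (q₁ : ℝ) < s
      · by_cases h2 : (q₂ : ℝ) < s
        · refine ⟨max q₁ q₂, ?_, ?_⟩ <;>
            · have hm : ((max q₁ q₂ : ℚ) : ℝ) < s := by
                rw [Rat.cast_max]; exact max_lt h1 h2
              simp only [if_pos h1, if_pos h2, if_pos hm]
              intro y hy
              simp only [Set.mem_setOf_eq, Rat.cast_max] at *
              first
                | exact le_trans hy (le_max_left _ _)
                | exact le_trans hy (le_max_right _ _)
        · exact ⟨q₁, subset_rfl, by simp [if_neg h2]⟩
      · exact ⟨q₂, by simp [if_neg h1], subset_rfl⟩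
    rw [hset, hdir.measure_iUnion]
    congr 1
    funext q
    split_ifs <;> simp
  simp_rw [heq]
  refine Measurable.iSup fun q => Measurable.ite ?_ ?_ measurable_const
  · exact measurableSet_lt measurable_const measurable_snd
  · exact (j.measurable_coe (hv measurableSet_Iic)).comp measurable_fst

/-- Joint measurability of `(x, s) ↦ j x {y | s < v y}`. -/
private lemma meas_gt_kernel {X : Type*} [MeasurableSpace X] (j : Kernel X X)
    (v : X → ℝ) (hv : Measurable v) :
    Measurable (fun p : X × ℝ => j p.1 {y | p.2 < v y}) := by
  have heq : ∀ p : X × ℝ, j p.1 {y | p.2 < v y}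
      = ⨆ q : ℚ, if p.2 < (q : ℝ) then j p.1 {y | (q : ℝ) ≤ v y} else 0 := by
    rintro ⟨x, s⟩
    have hset : {y | s < v y} = ⋃ q : ℚ, (if s < (q : ℝ) then {y | (q : ℝ) ≤ v y} else ∅) := by
      ext y
      simp only [Set.mem_setOf_eq, Set.mem_iUnion]
      constructor
      · intro h
        obtain ⟨q, hq1, hq2⟩ := exists_rat_btwn h
        exact ⟨q, by simp [hq1, hq2.le]⟩
      · rintro ⟨q, hq⟩
        by_cases h : s < (q : ℝ)
        · simp only [if_pos h, Set.mem_setOf_eq] at hq; linarith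
        · simp [if_neg h] at hq
    have hdir : Directed (· ⊆ ·)
        (fun q : ℚ => if s < (q : ℝ) then {y | (q : ℝ) ≤ v y} else ∅) := by
      intro q₁ q₂
      by_cases h1 : s < (q₁ : ℝ)
      · by_cases h2 : s < (q₂ : ℝ)
        · refine ⟨min q₁ q₂, ?_, ?_⟩ <;>
            · have hm : s < ((min q₁ q₂ : ℚ) : ℝ) := by
                rw [Rat.cast_min]; exact lt_min h1 h2
              simp only [if_pos h1, if_pos h2, if_pos hm]
              intro y hy
              simp only [Set.mem_setOf_eq, Rat.cast_min] at *
              first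
                | exact le_trans (min_le_left _ _) hy
                | exact le_trans (min_le_right _ _) hy
        · exact ⟨q₁, subset_rfl, by simp [if_neg h2]⟩
      · exact ⟨q₂, by simp [if_neg h1], subset_rfl⟩
    rw [hset, hdir.measure_iUnion]
    congr 1
    funext q
    split_ifs <;> simp
  simp_rw [heq]
  refine Measurable.iSup fun q => Measurable.ite ?_ ?_ measurable_const
  · exact measurableSet_lt measurable_snd measurable_const
  · exact (j.measurable_coe (hv measurableSet_Ici)).comp measurable_fst

/-- Measurability of `x ↦ ∫⁻ y, (w x − v y)² ∂(j x)` for an arbitrary kernel, via the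
layer-cake formula and Tonelli over the σ-finite Lebesgue measure on `(0, ∞)`. -/
private lemma kernel_sq_meas {X : Type*} [MeasurableSpace X] (j : Kernel X X)
    (w v : X → ℝ) (hw : Measurable w) (hv : Measurable v) :
    Measurable (fun x => ∫⁻ y, ENNReal.ofReal ((w x - v y) ^ 2) ∂(j x)) := by
  have hrw : (fun x => ∫⁻ y, ENNReal.ofReal ((w x - v y) ^ 2) ∂(j x))
      = fun x => ∫⁻ t in Set.Ioi (0:ℝ),
          (j x {y | v y < w x - Real.sqrt t} + j x {y | w x + Real.sqrt t < v y}) := by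
    funext x
    rw [lintegral_eq_lintegral_meas_lt (j x) (f := fun y => (w x - v y) ^ 2) (Filter.Eventually.of_forall fun y => sq_nonneg _)
      (((measurable_const.sub hv).pow_const 2).aemeasurable)]
    refine setLIntegral_congr_fun measurableSet_Ioi (fun t ht => ?_)
    have hsq : Real.sqrt t > 0 := Real.sqrt_pos.mpr ht
    have habs : ∀ a : ℝ, (t < a ^ 2 ↔ Real.sqrt t < |a|) := by
      intro a
      rw [← sq_abs a]
      rcases lt_or_eq_of_le (abs_nonneg a) with hpos | h0
      · exact (Real.sqrt_lt' hpos).symm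
      · rw [← h0]
        constructor
        · intro hh
          exfalso
          have ht' : (0:ℝ) < t := ht
          nlinarith
        · intro hh
          exfalso
          exact absurd hh (not_lt.mpr (Real.sqrt_nonneg t))
    have hset : {y | t < (w x - v y) ^ 2}
        = {y | v y < w x - Real.sqrt t} ∪ {y | w x + Real.sqrt t < v y} := by
      ext y
      simp only [Set.mem_setOf_eq, Set.mem_union]
      rw [habs (w x - v y), lt_abs]
      constructor
      · rintro (h | h)
        · exact Or.inl (by linarith)
        · exact Or.inr (by linarith)
      · rintro (h | h)
        · exact Or.inl (by linarith)
        · exact Or.inr (by linarith)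
    rw [hset, measure_union (Set.disjoint_left.mpr fun y h1 h2 => by
        simp only [Set.mem_setOf_eq] at h1 h2; linarith) (measurableSet_lt measurable_const hv)]
  rw [hrw]
  have hmeas : Measurable (fun p : X × ℝ =>
      j p.1 {y | v y < w p.1 - Real.sqrt p.2} + j p.1 {y | w p.1 + Real.sqrt p.2 < v y}) := by
    refine Measurable.add ?_ ?_
    · exact (meas_lt_kernel j v hv).comp
        (measurable_fst.prodMk ((hw.comp measurable_fst).sub
          (Real.continuous_sqrt.measurable.comp measurable_snd)))
    · exact (meas_gt_kernel j v hv).comp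
        ((measurable_fst.prodMk ((hw.comp measurable_fst).add
          (Real.continuous_sqrt.measurable.comp measurable_snd))).prodMk
          (hv.comp measurable_fst) |>.fst)
  exact hmeas.lintegral_prod_right'

/-- Weighted double Cauchy–Schwarz inequality of Davies' method for the jump part:
`∫ |u| ∫ |u(x)−u(y)||φ(x)−φ(y)| j(x,dy) dm
  ≤ (∫ φ ∫ (u(x)−u(y))² j(x,dy) dm)^{1/2} (∫ φ⁻¹ u² ∫ (φ(x)−φ(y))² j(x,dy) dm)^{1/2}`. -/
theorem stmt_8 {X : Type*} [MeasurableSpace X] (m : Measure X) (j : Kernel X X)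
    (u φ : X → ℝ) (hu : Measurable u) (hφm : Measurable φ) (hφ : ∀ x, 0 < φ x) :
    ∫⁻ x, ENNReal.ofReal |u x| * ∫⁻ y, ENNReal.ofReal (|u x - u y| * |φ x - φ y|) ∂(j x) ∂m
      ≤ (∫⁻ x, ENNReal.ofReal (φ x) * ∫⁻ y, ENNReal.ofReal ((u x - u y) ^ 2) ∂(j x) ∂m) ^ (1/2 : ℝ)
        * (∫⁻ x, ENNReal.ofReal ((φ x)⁻¹ * u x ^ 2) *
            ∫⁻ y, ENNReal.ofReal ((φ x - φ y) ^ 2) ∂(j x) ∂m) ^ (1/2 : ℝ) := by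
  set A : X → ENNReal := fun x => ∫⁻ y, ENNReal.ofReal ((u x - u y) ^ 2) ∂(j x) with hA
  set B : X → ENNReal := fun x => ∫⁻ y, ENNReal.ofReal ((φ x - φ y) ^ 2) ∂(j x) with hB
  -- Step 1: pointwise inner Cauchy–Schwarz in y
  have inner : ∀ x, (∫⁻ y, ENNReal.ofReal (|u x - u y| * |φ x - φ y|) ∂(j x))
      ≤ (A x) ^ (1/2 : ℝ) * (B x) ^ (1/2 : ℝ) := by
    intro x
    have hf : AEMeasurable (fun y => ENNReal.ofReal |u x - u y|) (j x) :=
      (ENNReal.measurable_ofReal.comp ((measurable_const.sub hu).abs)).aemeasurable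
    have hg : AEMeasurable (fun y => ENNReal.ofReal |φ x - φ y|) (j x) :=
      (ENNReal.measurable_ofReal.comp ((measurable_const.sub hφm).abs)).aemeasurable
    have hh := ENNReal.lintegral_mul_le_Lp_mul_Lq (j x) conj22 hf hg
    simp only [Pi.mul_apply] at hh
    calc (∫⁻ y, ENNReal.ofReal (|u x - u y| * |φ x - φ y|) ∂(j x))
        = ∫⁻ y, ENNReal.ofReal |u x - u y| * ENNReal.ofReal |φ x - φ y| ∂(j x) := by
          simp_rw [ENNReal.ofReal_mul (abs_nonneg _)]
      _ ≤ (∫⁻ y, ENNReal.ofReal |u x - u y| ^ (2:ℝ) ∂(j x)) ^ (1/2 : ℝ) *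
            (∫⁻ y, ENNReal.ofReal |φ x - φ y| ^ (2:ℝ) ∂(j x)) ^ (1/2 : ℝ) := hh
      _ = (A x) ^ (1/2 : ℝ) * (B x) ^ (1/2 : ℝ) := by
          rw [show (∫⁻ y, ENNReal.ofReal |u x - u y| ^ (2:ℝ) ∂(j x)) = A x from
              lintegral_congr fun y => ofReal_sq _,
            show (∫⁻ y, ENNReal.ofReal |φ x - φ y| ^ (2:ℝ) ∂(j x)) = B x from
              lintegral_congr fun y => ofReal_sq _]
  -- pointwise rewriting of the |u x| weight
  have key : ∀ x, ENNReal.ofReal |u x| * ((A x) ^ (1/2 : ℝ) * (B x) ^ (1/2 : ℝ))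
      = (ENNReal.ofReal (φ x) * A x) ^ (1/2 : ℝ) *
        (ENNReal.ofReal ((φ x)⁻¹ * u x ^ 2) * B x) ^ (1/2 : ℝ) := by
    intro x
    have h1 : ENNReal.ofReal |u x|
        = (ENNReal.ofReal (φ x)) ^ (1/2 : ℝ)
          * (ENNReal.ofReal ((φ x)⁻¹ * u x ^ 2)) ^ (1/2 : ℝ) := by
      rw [← ENNReal.mul_rpow_of_nonneg _ _ (by norm_num : (0:ℝ) ≤ 1/2),
        ← ENNReal.ofReal_mul (hφ x).le]
      have h2 : φ x * ((φ x)⁻¹ * u x ^ 2) = |u x| ^ 2 := by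
        rw [← mul_assoc, mul_inv_cancel₀ (hφ x).ne', one_mul, sq_abs]
      rw [h2, ENNReal.ofReal_pow (abs_nonneg _), sq_rpow_half]
    rw [h1, ENNReal.mul_rpow_of_nonneg _ _ (by norm_num : (0:ℝ) ≤ 1/2),
      ENNReal.mul_rpow_of_nonneg _ _ (by norm_num : (0:ℝ) ≤ 1/2)]
    ring
  -- measurability of A and B without s-finiteness
  have hAmeas : Measurable A := kernel_sq_meas j u u hu hu
  have hBmeas : Measurable B := kernel_sq_meas j φ φ hφm hφm
  calc ∫⁻ x, ENNReal.ofReal |u x| * ∫⁻ y, ENNReal.ofReal (|u x - u y| * |φ x - φ y|) ∂(j x) ∂m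
      ≤ ∫⁻ x, (ENNReal.ofReal (φ x) * A x) ^ (1/2 : ℝ) *
          (ENNReal.ofReal ((φ x)⁻¹ * u x ^ 2) * B x) ^ (1/2 : ℝ) ∂m := by
        refine lintegral_mono fun x => ?_
        rw [← key x]
        exact mul_le_mul_right (inner x) _
    _ ≤ (∫⁻ x, ((ENNReal.ofReal (φ x) * A x) ^ (1/2 : ℝ)) ^ (2:ℝ) ∂m) ^ (1/2 : ℝ) *
          (∫⁻ x, ((ENNReal.ofReal ((φ x)⁻¹ * u x ^ 2) * B x) ^ (1/2 : ℝ)) ^ (2:ℝ) ∂m)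
            ^ (1/2 : ℝ) := by
        have hf : AEMeasurable (fun x => (ENNReal.ofReal (φ x) * A x) ^ (1/2 : ℝ)) m :=
          (((ENNReal.measurable_ofReal.comp hφm).mul hAmeas).pow_const _).aemeasurable
        have hg : AEMeasurable
            (fun x => (ENNReal.ofReal ((φ x)⁻¹ * u x ^ 2) * B x) ^ (1/2 : ℝ)) m :=
          (((ENNReal.measurable_ofReal.comp ((hφm.inv).mul (hu.pow_const 2))).mul
            hBmeas).pow_const _).aemeasurable
        exact ENNReal.lintegral_mul_le_Lp_mul_Lq m conj22 hf hg
    _ = (∫⁻ x, ENNReal.ofReal (φ x) * A x ∂m) ^ (1/2 : ℝ) *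
          (∫⁻ x, ENNReal.ofReal ((φ x)⁻¹ * u x ^ 2) * B x ∂m) ^ (1/2 : ℝ) := by
        simp_rw [rpow_half_sq]
end
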